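/- Let c ≥ 2, let W ∈ ℝ^{c×d}, let z ∈ ℝ^d with z ≠ 0, set y := W z, and let ỹ ∈ ℝ^c. Fix a class index t and let γ := y_t − max_{i≠t} y_i. Define ΔW* := (ỹ − y) zᵀ / ‖z‖₂². If the target output changes the predicted class away from t, i.e. there exists w ≠ t with ỹ_w ≥ ỹ_t, then γ ≤ √2 · ‖z‖₂ · ‖ΔW*‖_F. (The exact minimal single-sample final-layer perturbation never violates the margin–Lipschitz robustness bound with p = 2, since the map W ↦ W z is ‖z‖₂-Lipschitz in the Frobenius norm.) -/

import Mathlib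

open Matrix

/-- Frobenius norm of a real matrix. -/
noncomputable def frobNorm {n q : ℕ} (A : Matrix (Fin n) (Fin q) ℝ) : ℝ :=
  Real.sqrt (∑ i, ∑ j, (A i j) ^ 2)

/-- Euclidean norm of a finite real vector. -/
noncomputable def euclNorm {m : ℕ} (u : Fin m → ℝ) : ℝ :=
  Real.sqrt (∑ i, (u i) ^ 2)

/-- The classification margin `y t - max_{i ≠ t} y i` (for `c ≥ 2` classes). -/
noncomputable def margin {c : ℕ} (hc : 2 ≤ c) (y : Fin c → ℝ) (t : Fin c) : ℝ :=
  y t - (Finset.univ.erase t).sup' (by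
    rw [← Finset.card_pos, Finset.card_erase_of_mem (Finset.mem_univ t),
      Finset.card_univ, Fintype.card_fin]
    omega) y

/-- The exact minimal single-sample final-layer perturbation
`ΔW* = (ỹ − y) zᵀ / ‖z‖₂²` never violates the margin–Lipschitz robustness bound
with `p = 2`: if the target output `ỹ` changes the predicted class away from
`t`, then `γ ≤ √2 · ‖z‖₂ · ‖ΔW*‖_F`. -/
theorem single_sample_perturbation_respects_margin_bound {c d : ℕ} (hc : 2 ≤ c)
    (W : Matrix (Fin c) (Fin d) ℝ) (z : Fin d → ℝ) (hz : z ≠ 0)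
    (ytil : Fin c → ℝ) (t : Fin c)
    (hflip : ∃ w, w ≠ t ∧ ytil w ≥ ytil t) :
    margin hc (W.mulVec z) t ≤
      Real.sqrt 2 * euclNorm z *
        frobNorm ((euclNorm z ^ 2)⁻¹ • vecMulVec (ytil - W.mulVec z) z) := by
  obtain ⟨w, hwt, hwy⟩ := hflip
  set y := W.mulVec z with hy
  set u := ytil - y with hu
  -- positivity of ∑ z i ^ 2
  have hzsum : 0 < ∑ i, (z i) ^ 2 := by
    obtain ⟨i, hi⟩ := Function.ne_iff.mp hz
    exact Finset.sum_pos' (fun j _ => sq_nonneg _)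
      ⟨i, Finset.mem_univ i, by
        have : 0 < |z i| := abs_pos.mpr hi
        nlinarith [sq_abs (z i)]⟩
  have hznorm : 0 < euclNorm z := Real.sqrt_pos.mpr hzsum
  have hzsq : euclNorm z ^ 2 = ∑ i, (z i) ^ 2 := Real.sq_sqrt hzsum.le
  -- compute RHS
  have hfrob : frobNorm ((euclNorm z ^ 2)⁻¹ • vecMulVec u z)
      = (euclNorm z ^ 2)⁻¹ * euclNorm u * euclNorm z := by
    have h1 : ∀ i j, ((euclNorm z ^ 2)⁻¹ • vecMulVec u z) i j
        = (euclNorm z ^ 2)⁻¹ * (u i * z j) := by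
      intro i j; simp [vecMulVec_apply]
    have h2 : (∑ i, ∑ j, (((euclNorm z ^ 2)⁻¹ • vecMulVec u z) i j) ^ 2)
        = ((euclNorm z ^ 2)⁻¹)^2 * ((∑ i, (u i)^2) * (∑ j, (z j)^2)) := by
      simp only [h1]
      rw [Finset.sum_mul_sum, Finset.mul_sum]
      refine Finset.sum_congr rfl fun i _ => ?_
      rw [Finset.mul_sum]
      refine Finset.sum_congr rfl fun j _ => ?_
      ring
    rw [frobNorm, h2, Real.sqrt_mul (sq_nonneg _),
      Real.sqrt_mul (Finset.sum_nonneg fun i _ => sq_nonneg _),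
      Real.sqrt_sq (by positivity)]
    simp only [euclNorm]; ring
  have hrhs : Real.sqrt 2 * euclNorm z *
      frobNorm ((euclNorm z ^ 2)⁻¹ • vecMulVec u z) = Real.sqrt 2 * euclNorm u := by
    rw [hfrob]; field_simp
  rw [hrhs]
  -- margin bound
  have hwmem : w ∈ Finset.univ.erase t := Finset.mem_erase.mpr ⟨hwt, Finset.mem_univ w⟩
  have hsup : y w ≤ (Finset.univ.erase t).sup' (by
      rw [← Finset.card_pos, Finset.card_erase_of_mem (Finset.mem_univ t),
        Finset.card_univ, Fintype.card_fin]
      omega) y := Finset.le_sup' y hwmem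
  have h1 : margin hc y t ≤ y t - y w := by
    unfold margin; linarith
  have h2 : y t - y w ≤ |u t| + |u w| := by
    have : u t = ytil t - y t := by simp [hu, Pi.sub_apply]
    have h3 : u w = ytil w - y w := by simp [hu, Pi.sub_apply]
    have h4 : y t - y w ≤ (y t - ytil t) + (ytil w - y w) := by linarith
    have ha : y t - ytil t ≤ |u t| := by rw [this, abs_sub_comm]; exact le_abs_self _
    have hb : ytil w - y w ≤ |u w| := by rw [h3]; exact le_abs_self _
    linarith
  have h5 : |u t| + |u w| ≤ Real.sqrt 2 * Real.sqrt ((u t)^2 + (u w)^2) := by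
    rw [← Real.sqrt_mul (by norm_num)]
    rw [show |u t| + |u w| = Real.sqrt ((|u t| + |u w|)^2) from
      (Real.sqrt_sq (by positivity)).symm]
    apply Real.sqrt_le_sqrt
    have := sq_nonneg (|u t| - |u w|)
    nlinarith [sq_abs (u t), sq_abs (u w)]
  have h6 : Real.sqrt ((u t)^2 + (u w)^2) ≤ euclNorm u := by
    apply Real.sqrt_le_sqrt
    have : (u t)^2 + (u w)^2 = ∑ i ∈ ({t, w} : Finset (Fin c)), (u i)^2 := by
      rw [Finset.sum_pair (Ne.symm hwt)]
    rw [this]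
    exact Finset.sum_le_sum_of_subset_of_nonneg (Finset.subset_univ _)
      (fun i _ _ => sq_nonneg _)
  have hs2 : (0:ℝ) ≤ Real.sqrt 2 := Real.sqrt_nonneg 2
  calc margin hc y t ≤ |u t| + |u w| := le_trans h1 h2
    _ ≤ Real.sqrt 2 * Real.sqrt ((u t)^2 + (u w)^2) := h5
    _ ≤ Real.sqrt 2 * euclNorm u := by exact mul_le_mul_of_nonneg_left h6 hs2
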